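/- arXiv:2301.06141 — 2 statements merged into one kernel-verified Lean document; each statement's English description precedes it below -/
import Mathlib

section
/- Let A ∈ [0,1]^{n×m}, b ∈ [0,1]^n, and F(c) = A ⊡ (Aᵗ ⊡_→ c). For c ∈ [0,1]^n, the system A ⊡ x = c has a solution x ∈ [0,1]^m if and only if F(c) = c. -/
noncomputable def godel (x y : ℝ) : ℝ := if x ≤ y then 1 else y

noncomputable def maxMin {n m : ℕ} [NeZero m] (A : Fin n → Fin m → ℝ) (x : Fin m → ℝ) :
    Fin n → ℝ :=
  fun i => Finset.univ.sup' Finset.univ_nonempty (fun j => min (A i j) (x j))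

noncomputable def godelComp {n m : ℕ} [NeZero n] (A : Fin n → Fin m → ℝ) (c : Fin n → ℝ) :
    Fin m → ℝ :=
  fun j => Finset.univ.inf' Finset.univ_nonempty (fun i => godel (A i j) (c i))

noncomputable def Fmap {n m : ℕ} [NeZero n] [NeZero m] (A : Fin n → Fin m → ℝ)
    (c : Fin n → ℝ) : Fin n → ℝ :=
  maxMin A (godelComp A c)

lemma godelComp_mem {n m : ℕ} [NeZero n] (A : Fin n → Fin m → ℝ) (c : Fin n → ℝ)
    (hc : ∀ i, c i ∈ Set.Icc (0:ℝ) 1) : ∀ j, godelComp A c j ∈ Set.Icc (0:ℝ) 1 := by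
  intro j
  constructor
  · apply Finset.le_inf'
    intro i _
    unfold godel
    split
    · norm_num
    · exact (hc i).1
  · refine (Finset.inf'_le _ (Finset.mem_univ (0 : Fin n))).trans ?_
    unfold godel
    split
    · exact le_refl 1
    · exact (hc 0).2

lemma Fmap_le {n m : ℕ} [NeZero n] [NeZero m] (A : Fin n → Fin m → ℝ) (c : Fin n → ℝ) :
    ∀ i, Fmap A c i ≤ c i := by
  intro i
  unfold Fmap maxMin
  apply Finset.sup'_le
  intro j _
  by_cases h : A i j ≤ c i
  · exact (min_le_left _ _).trans h
  · refine (min_le_right _ _).trans ?_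
    have := Finset.inf'_le (b := i) (fun i => godel (A i j) (c i))
      (Finset.mem_univ i)
    rw [godel, if_neg h] at this
    exact this

theorem stmt9 {n m : ℕ} [NeZero n] [NeZero m] (A : Fin n → Fin m → ℝ)
    (hA : ∀ i j, A i j ∈ Set.Icc (0:ℝ) 1)
    (c : Fin n → ℝ) (hc : ∀ i, c i ∈ Set.Icc (0:ℝ) 1) :
    (∃ x : Fin m → ℝ, (∀ j, x j ∈ Set.Icc (0:ℝ) 1) ∧ maxMin A x = c) ↔ Fmap A c = c := by
  constructor
  · rintro ⟨x, hx, hsol⟩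
    funext i
    refine le_antisymm (Fmap_le A c i) ?_
    have hxg : ∀ j, x j ≤ godelComp A c j := by
      intro j
      apply Finset.le_inf'
      intro i _
      unfold godel
      split
      · exact (hx j).2
      · rename_i h
        push_neg at h
        by_contra h2
        push_neg at h2
        have hmin : c i < min (A i j) (x j) := lt_min h h2
        have : min (A i j) (x j) ≤ c i := by
          rw [← hsol]
          exact Finset.le_sup' (fun j => min (A i j) (x j)) (Finset.mem_univ j)
        linarith
    calc c i = maxMin A x i := by rw [hsol]
      _ ≤ Fmap A c i := by
        unfold Fmap maxMin
        apply Finset.sup'_le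
        intro j _
        exact (min_le_min le_rfl (hxg j)).trans
          (Finset.le_sup' (fun j => min (A i j) (godelComp A c j)) (Finset.mem_univ j))
  · intro hF
    exact ⟨godelComp A c, godelComp_mem A c hc, hF⟩
end

section
/- Let A ∈ [0,1]^{n×m}, b ∈ [0,1]^n, Δ the Chebyshev distance of b, and η = Aᵗ ⊡_→ F(b̄(Δ)). For any x ∈ [0,1]^m: ‖A ⊡ x - b‖_∞ = Δ if and only if b̲(Δ) ≤ A ⊡ x componentwise and x ≤ η componentwise. -/
noncomputable def chebNorm {n : ℕ} [NeZero n] (b c : Fin n → ℝ) : ℝ :=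
  Finset.univ.sup' Finset.univ_nonempty (fun i => |b i - c i|)

lemma min_le_iff_godel {a x c : ℝ} (hx : x ≤ 1) : min a x ≤ c ↔ x ≤ godel a c := by
  unfold godel
  split_ifs with h
  · exact ⟨fun _ => hx, fun _ => le_trans (min_le_left _ _) h⟩
  · constructor
    · intro hm
      by_contra hxc
      push_neg at hxc
      have : c < min a x := lt_min (lt_of_not_ge h) hxc
      linarith
    · intro hxc; exact le_trans (min_le_right _ _) hxc

lemma galois {n m : ℕ} [NeZero n] [NeZero m] (A : Fin n → Fin m → ℝ)
    (x : Fin m → ℝ) (hx : ∀ j, x j ≤ 1) (c : Fin n → ℝ) :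
    maxMin A x ≤ c ↔ x ≤ godelComp A c := by
  constructor
  · intro h j
    rw [godelComp, Finset.le_inf'_iff]
    intro i _
    rw [← min_le_iff_godel (hx j)]
    have h' : Finset.univ.sup' Finset.univ_nonempty (fun j => min (A i j) (x j)) ≤ c i := h i
    exact le_trans (Finset.le_sup' (fun j => min (A i j) (x j)) (Finset.mem_univ j)) h'
  · intro h i
    rw [maxMin, Finset.sup'_le_iff]
    intro j _
    rw [min_le_iff_godel (hx j)]
    exact le_trans (h j) (Finset.inf'_le _ (Finset.mem_univ i))

lemma godelComp_le_one {n m : ℕ} [NeZero n] (A : Fin n → Fin m → ℝ)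
    (c : Fin n → ℝ) (hc : ∀ i, c i ≤ 1) (j : Fin m) : godelComp A c j ≤ 1 := by
  refine le_trans (Finset.inf'_le _ (Finset.mem_univ (0 : Fin n))) ?_
  unfold godel
  split_ifs with h
  · exact le_refl 1
  · exact hc 0

lemma maxMin_mono {n m : ℕ} [NeZero m] (A : Fin n → Fin m → ℝ)
    {x y : Fin m → ℝ} (h : x ≤ y) : maxMin A x ≤ maxMin A y := by
  intro i
  apply Finset.sup'_mono_fun
  intro j _
  exact min_le_min le_rfl (h j)

theorem stmt15 {n m : ℕ} [NeZero n] [NeZero m] (A : Fin n → Fin m → ℝ)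
    (hA : ∀ i j, A i j ∈ Set.Icc (0:ℝ) 1)
    (b : Fin n → ℝ) (hb : ∀ i, b i ∈ Set.Icc (0:ℝ) 1)
    (Δ : ℝ)
    (hΔ : Δ = sInf {d : ℝ | ∃ x : Fin m → ℝ, (∀ j, x j ∈ Set.Icc (0:ℝ) 1) ∧
        d = chebNorm b (maxMin A x)})
    (x : Fin m → ℝ) (hx : ∀ j, x j ∈ Set.Icc (0:ℝ) 1) :
    chebNorm b (maxMin A x) = Δ ↔
      (∀ i, max (b i - Δ) 0 ≤ maxMin A x i) ∧
        x ≤ godelComp A (Fmap A (fun k => min (b k + Δ) 1)) := by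
  set bb : Fin n → ℝ := fun k => min (b k + Δ) 1 with hbb
  have hxle1 : ∀ j, x j ≤ 1 := fun j => (hx j).2
  have hbb1 : ∀ i, bb i ≤ 1 := fun i => min_le_right _ _
  -- nonnegativity of maxMin
  have hMnonneg : ∀ i, 0 ≤ maxMin A x i := by
    intro i
    show (0:ℝ) ≤ Finset.univ.sup' Finset.univ_nonempty (fun j => min (A i j) (x j))
    exact le_trans (le_min (hA i 0).1 (hx 0).1)
      (Finset.le_sup' (fun j => min (A i j) (x j)) (Finset.mem_univ (0 : Fin m)))
  -- Δ is a lower bound of the norm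
  have hDle : Δ ≤ chebNorm b (maxMin A x) := by
    rw [hΔ]
    apply csInf_le
    · refine ⟨0, ?_⟩
      rintro d ⟨y, _, rfl⟩
      exact le_trans (abs_nonneg (b 0 - maxMin A y 0))
        (Finset.le_sup' (fun i => |b i - maxMin A y i|) (Finset.mem_univ (0 : Fin n)))
    · exact ⟨x, hx, rfl⟩
  -- key: maxMin A x ≤ Fmap A bb ↔ maxMin A x ≤ bb
  have hFbb_le : Fmap A bb ≤ bb := by
    rw [Fmap, galois A _ (godelComp_le_one A bb hbb1)]
  have hkey : x ≤ godelComp A (Fmap A bb) ↔ ∀ i, maxMin A x i ≤ b i + Δ := by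
    rw [← galois A x hxle1]
    constructor
    · intro h i
      exact le_trans (le_trans (h i) (hFbb_le i)) (min_le_left _ _)
    · intro h
      have hle : maxMin A x ≤ bb := by
        intro i
        refine le_min (h i) ?_
        rw [maxMin, Finset.sup'_le_iff]
        intro j _
        exact le_trans (min_le_left _ _) (hA i j).2
      calc maxMin A x ≤ maxMin A (godelComp A bb) :=
            maxMin_mono A ((galois A x hxle1 bb).mp hle)
        _ = Fmap A bb := rfl
  constructor
  · intro h
    have habs : ∀ i, |b i - maxMin A x i| ≤ Δ := by
      intro i
      rw [← h, chebNorm]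
      exact Finset.le_sup' (fun i => |b i - maxMin A x i|) (Finset.mem_univ i)
    constructor
    · intro i
      have := (abs_sub_le_iff.mp (habs i)).1
      exact max_le (by linarith) (hMnonneg i)
    · rw [hkey]
      intro i
      have := (abs_sub_le_iff.mp (habs i)).2
      linarith
  · rintro ⟨h1, h2⟩
    refine le_antisymm ?_ hDle
    rw [chebNorm, Finset.sup'_le_iff]
    intro i _
    rw [abs_sub_le_iff]
    have hlo : b i - Δ ≤ maxMin A x i := le_trans (le_max_left _ _) (h1 i)
    have hhi : maxMin A x i ≤ b i + Δ := (hkey.mp h2) i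
    constructor <;> linarith
end
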